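/- In the reduction, if F is an O-border basis for some order ideal O and X_i appears in clause C_l, then the monomials t_{X_i} and t_{X_i}·x_{c_l}/c_l cannot both lie in ∂O. -/

import Mathlib

namespace BBD

open Finsupp

variable {σ : Type*}

/-- `t'` is a child of `t`: `t' · y = t` for some variable `y`. -/
def isChild (t' t : σ →₀ ℕ) : Prop := ∃ y : σ, t' + Finsupp.single y 1 = t

/-- The set of children of a monomial `t`. -/
def children (t : σ →₀ ℕ) : Set (σ →₀ ℕ) := {t' | isChild t' t}

/-- The children of a set of monomials. -/
def childrenSet (S : Set (σ →₀ ℕ)) : Set (σ →₀ ℕ) := ⋃ s ∈ S, children s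

/-- The set of parents of a monomial `t`. -/
def parents (t : σ →₀ ℕ) : Set (σ →₀ ℕ) := {t' | isChild t t'}

/-- An order ideal: a nonempty finite set of monomials closed under divisibility. -/
def IsOrderIdeal (O : Set (σ →₀ ℕ)) : Prop :=
  O.Finite ∧ O.Nonempty ∧ ∀ t ∈ O, ∀ t', t' ≤ t → t' ∈ O

/-- The border of a set of monomials: `(T₁ · O) \ O`. -/
def borderOf (O : Set (σ →₀ ℕ)) : Set (σ →₀ ℕ) :=
  {t | t ∉ O ∧ ∃ t' ∈ O, ∃ y : σ, t = t' + Finsupp.single y 1}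


/-! ### Border prebases and border bases -/

/-- `G` is an `O`-border prebasis: there is a bijection `e` from the border of `O` to `G`
such that `e b = b - Σ α_i t_i` with the `t_i ∈ O`. -/
def IsBorderPrebasis {K : Type*} [Field K] (O : Set (σ →₀ ℕ)) (G : Set (MvPolynomial σ K)) :
    Prop :=
  ∃ e : borderOf O ≃ G, ∀ b : borderOf O,
    MvPolynomial.coeff (b : σ →₀ ℕ) (e b : MvPolynomial σ K) = 1 ∧
    ((e b : MvPolynomial σ K).support : Set (σ →₀ ℕ)) \ {(b : σ →₀ ℕ)} ⊆ O

/-- `G` is an `O`-border basis of the ideal `a`: it is an `O`-border prebasis contained in `a`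
such that the residue classes of the elements of `O` form a vector-space basis of the
quotient ring. -/
def IsBorderBasis {K : Type*} [Field K] (O : Set (σ →₀ ℕ)) (a : Ideal (MvPolynomial σ K))
    (G : Set (MvPolynomial σ K)) : Prop :=
  IsBorderPrebasis O G ∧ (∀ g ∈ G, g ∈ a) ∧
  LinearIndependent K
    (fun t : O => Ideal.Quotient.mk a (MvPolynomial.monomial (t : σ →₀ ℕ) (1 : K))) ∧
  Submodule.span K
    (Set.range fun t : O => Ideal.Quotient.mk a (MvPolynomial.monomial (t : σ →₀ ℕ) (1 : K)))
    = ⊤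

/-! ### Setup for the 3,4-SAT reduction -/

/-- The indeterminates `x_1,…,x_n, x̄_1,…,x̄_n, c_1,…,c_m, x_{c_1},…,x_{c_m}, X`. -/
abbrev Var (n m : ℕ) := (Fin n ⊕ Fin n) ⊕ (Fin m ⊕ Fin m) ⊕ Unit

variable {n m : ℕ}

def xVar (i : Fin n) : Var n m := Sum.inl (Sum.inl i)
def xbarVar (i : Fin n) : Var n m := Sum.inl (Sum.inr i)
def cVar (l : Fin m) : Var n m := Sum.inr (Sum.inl (Sum.inl l))
def xcVar (l : Fin m) : Var n m := Sum.inr (Sum.inl (Sum.inr l))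
def XVar : Var n m := Sum.inr (Sum.inr ())

-- A 3,4-SAT instance: clause `l` consists of the three literals `lit l 0, lit l 1, lit l 2`,
-- where the literal `(i, true)` is `X_i` and `(i, false)` is `X̄_i`.
variable (lit : Fin m → Fin 3 → Fin n × Bool)

/-- The set `S_i` of (indices of) clauses in which `X_i` or `X̄_i` appears. -/
def Socc (i : Fin n) : Finset (Fin m) :=
  Finset.univ.filter fun l => ∃ k : Fin 3, (lit l k).1 = i

/-- `t_{C_{x_i}} = (∏_{j ∈ S_i} c_j) · X^{4 - |S_i|}`. -/
noncomputable def tC (i : Fin n) : Var n m →₀ ℕ :=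
  (∑ l ∈ Socc lit i, Finsupp.single (cVar l) 1) +
    Finsupp.single XVar (4 - (Socc lit i).card)

/-- `t_{X_i} = x_i · x̄_i² · t_{C_{x_i}}`. -/
noncomputable def tX (i : Fin n) : Var n m →₀ ℕ :=
  Finsupp.single (xVar i) 1 + Finsupp.single (xbarVar i) 2 + tC lit i

/-- `t_{X̄_i} = x_i² · x̄_i · t_{C_{x_i}}`. -/
noncomputable def tXbar (i : Fin n) : Var n m →₀ ℕ :=
  Finsupp.single (xVar i) 2 + Finsupp.single (xbarVar i) 1 + tC lit i

/-- The term `t_L · x_{c_l} / c_l` associated to a literal `L` and a clause `C_l`. -/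
noncomputable def termLit (p : Fin n × Bool) (l : Fin m) : Var n m →₀ ℕ :=
  (if p.2 then tX lit p.1 else tXbar lit p.1) + Finsupp.single (xcVar l) 1 -
    Finsupp.single (cVar l) 1

/-- `P_i = P_{X_i} ∪ P_{X̄_i}`. -/
noncomputable def Pset (i : Fin n) : Set (Var n m →₀ ℕ) :=
  {t | ∃ l : Fin m, (∃ k : Fin 3, lit l k = (i, true)) ∧
    t = tX lit i + Finsupp.single (xcVar l) 1} ∪
  {t | ∃ l : Fin m, (∃ k : Fin 3, lit l k = (i, false)) ∧
    t = tXbar lit i + Finsupp.single (xcVar l) 1}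

/-- The region `R_i = k(P_i)`, the set of children of `P_i`. -/
noncomputable def Reg (i : Fin n) : Set (Var n m →₀ ℕ) := childrenSet (Pset lit i)

/-- `K_i = K_{X_i} ∪ K_{X̄_i} ∪ {t_{X_i}, t_{X̄_i}}`. -/
noncomputable def Kset (i : Fin n) : Set (Var n m →₀ ℕ) :=
  {tX lit i, tXbar lit i} ∪
  {t | ∃ l : Fin m, (∃ k : Fin 3, lit l k = (i, true)) ∧ t = termLit lit (i, true) l} ∪
  {t | ∃ l : Fin m, (∃ k : Fin 3, lit l k = (i, false)) ∧ t = termLit lit (i, false) l}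

/-- The set of polynomials `F = F_v ∪ F_c ∪ F₁ ∪ F₂` constructed in the reduction. -/
noncomputable def Fset (K : Type*) [Field K] : Set (MvPolynomial (Var n m) K) :=
  {p | ∃ i : Fin n, p = MvPolynomial.monomial (tX lit i) (1 : K) +
    MvPolynomial.monomial (tXbar lit i) (1 : K)} ∪
  {p | ∃ l : Fin m, p = ∑ k : Fin 3, MvPolynomial.monomial (termLit lit (lit l k) l) (1 : K)} ∪
  {p | ∃ t : Var n m →₀ ℕ, (t.sum fun _ e => e) = 8 ∧ p = MvPolynomial.monomial t (1 : K)} ∪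
  {p | ∃ i : Fin n, ∃ t ∈ Reg lit i \ Kset lit i, p = MvPolynomial.monomial t (1 : K)}

/-! ### Auxiliary lemmas -/

theorem monomial_mem_border {K : Type*} [Field K] {O : Set (σ →₀ ℕ)}
    {G : Set (MvPolynomial σ K)} (hpre : IsBorderPrebasis O G) {t : σ →₀ ℕ}
    (hg : MvPolynomial.monomial t (1 : K) ∈ G) : t ∈ borderOf O := by
  obtain ⟨e, he⟩ := hpre
  have h1 := (he (e.symm ⟨_, hg⟩)).1
  rw [Equiv.apply_symm_apply] at h1
  classical
  rw [MvPolynomial.coeff_monomial] at h1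
  split_ifs at h1 with h
  · exact h ▸ (e.symm ⟨_, hg⟩).2
  · exact absurd h1 zero_ne_one

/-- The degree homomorphism on exponent vectors. -/
noncomputable def degHom (σ : Type*) : (σ →₀ ℕ) →+ ℕ :=
  Finsupp.liftAddHom fun _ => AddMonoidHom.id ℕ

theorem degHom_single (v : σ) (k : ℕ) : degHom σ (Finsupp.single v k) = k :=
  Finsupp.liftAddHom_apply_single _ _ _

theorem degHom_eq_sum (f : σ →₀ ℕ) : degHom σ f = f.sum fun _ e => e :=
  Finsupp.liftAddHom_apply _ _

section Reduction

variable (lit : Fin m → Fin 3 → Fin n × Bool)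

theorem tC_apply (i : Fin n) (v : Var n m) :
    tC lit i v = (∑ l ∈ Socc lit i, if cVar l = v then 1 else 0) +
      (if (XVar : Var n m) = v then 4 - (Socc lit i).card else 0) := by
  simp only [tC, Finsupp.add_apply, Finsupp.finset_sum_apply, Finsupp.single_apply]

theorem tC_apply_x (i j : Fin n) : tC lit i (xVar j) = 0 := by
  rw [tC_apply]; simp [cVar, XVar, xVar]

theorem tC_apply_xc (i : Fin n) (l : Fin m) : tC lit i (xcVar l) = 0 := by
  rw [tC_apply]; simp [cVar, XVar, xcVar]

theorem tC_apply_c (i : Fin n) (l : Fin m) :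
    tC lit i (cVar l) = if l ∈ Socc lit i then 1 else 0 := by
  rw [tC_apply]
  have : ∀ l' : Fin m, ((cVar l' : Var n m) = cVar l) ↔ l' = l := by simp [cVar]
  simp only [this, XVar, cVar]
  simp [Finset.sum_ite_eq']

theorem tX_apply_x (i : Fin n) : tX lit i (xVar i) = 1 := by
  rw [tX, Finsupp.add_apply, Finsupp.add_apply, tC_apply_x, Finsupp.single_eq_same,
    Finsupp.single_eq_of_ne (by simp [xVar, xbarVar])]
  norm_num

theorem tXbar_apply_x (i : Fin n) : tXbar lit i (xVar i) = 2 := by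
  rw [tXbar, Finsupp.add_apply, Finsupp.add_apply, tC_apply_x, Finsupp.single_eq_same,
    Finsupp.single_eq_of_ne (by simp [xVar, xbarVar])]
  norm_num

theorem tX_apply_xc (i : Fin n) (l : Fin m) : tX lit i (xcVar l) = 0 := by
  rw [tX, Finsupp.add_apply, Finsupp.add_apply, tC_apply_xc,
    Finsupp.single_eq_of_ne (by simp [xVar, xcVar]),
    Finsupp.single_eq_of_ne (by simp [xbarVar, xcVar])]
  norm_num

theorem tX_apply_c {i : Fin n} {l : Fin m} (h : l ∈ Socc lit i) : tX lit i (cVar l) = 1 := by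
  rw [tX, Finsupp.add_apply, Finsupp.add_apply, tC_apply_c, if_pos h,
    Finsupp.single_eq_of_ne (by simp [xVar, cVar]),
    Finsupp.single_eq_of_ne (by simp [xbarVar, cVar])]
  norm_num

theorem termLit_add_cancel {i : Fin n} {l : Fin m} (h : l ∈ Socc lit i) :
    termLit lit (i, true) l + Finsupp.single (cVar l) 1 =
      tX lit i + Finsupp.single (xcVar l) 1 := by
  have hle : (Finsupp.single (cVar l) 1 : Var n m →₀ ℕ) ≤
      tX lit i + Finsupp.single (xcVar l) 1 := by
    rw [Finsupp.single_le_iff, Finsupp.add_apply, tX_apply_c lit h,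
      Finsupp.single_eq_of_ne (by simp [xcVar, cVar])]
    norm_num
  simpa [termLit] using tsub_add_cancel_of_le hle

end Reduction

theorem not_both_in_border {K : Type*} [Field K]
    (h4 : ∀ i : Fin n, (Socc lit i).card ≤ 4)
    (hd : ∀ (i : Fin n) (l : Fin m),
      ¬ ((∃ k : Fin 3, lit l k = (i, true)) ∧ (∃ k : Fin 3, lit l k = (i, false))))
    (O : Set (Var n m →₀ ℕ)) (hO : IsOrderIdeal O)
    (hBB : IsBorderBasis O (Ideal.span (Fset lit K)) (Fset lit K))
    (i : Fin n) (l : Fin m) (hocc : ∃ k : Fin 3, lit l k = (i, true)) :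
    ¬ (tX lit i ∈ borderOf O ∧ termLit lit (i, true) l ∈ borderOf O) := by
  classical
  rintro ⟨h1, h2⟩
  have hpre := hBB.1
  have hlS : l ∈ Socc lit i := by
    obtain ⟨k, hk⟩ := hocc
    simp only [Socc, Finset.mem_filter, Finset.mem_univ, true_and]
    exact ⟨k, by rw [hk]⟩
  set T := tX lit i + Finsupp.single (xcVar l) 1 with hT
  have hkey : termLit lit (i, true) l + Finsupp.single (cVar l) 1 = T :=
    termLit_add_cancel lit hlS
  have hTP : T ∈ Pset lit i := Set.mem_union_left _ ⟨l, hocc, rfl⟩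
  -- every child of `T` lies in the border
  have hchild : ∀ t' ∈ children T, t' ∈ borderOf O := by
    rintro t' ⟨y, hy⟩
    by_cases hy1 : y = xcVar l
    · have hy' := hy
      rw [hT] at hy'
      subst hy1
      have ht' : t' = tX lit i := add_right_cancel hy'
      rwa [ht']
    by_cases hy2 : y = cVar l
    · have ht' : t' = termLit lit (i, true) l := by
        subst hy2
        exact add_right_cancel (hy.trans hkey.symm)
      rwa [ht']
    -- otherwise `t'` is a monomial of `F₂`
    apply monomial_mem_border hpre
    refine Set.mem_union_right _ ⟨i, t', ⟨Set.mem_biUnion hTP ⟨y, hy⟩, ?_⟩, rfl⟩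
    have hy' := hy
    rw [hT] at hy'
    rintro (((rfl | rfl) | ⟨l', hl', rfl⟩) | ⟨l', hl', rfl⟩)
    · exact hy1 (Finsupp.single_left_injective one_ne_zero (add_left_cancel hy'))
    · have hxclx : (Finsupp.single (xcVar l) (1 : ℕ)) (xVar i) = 0 :=
        Finsupp.single_eq_of_ne (by simp [xcVar, xVar])
      have h := DFunLike.congr_fun hy' (xVar i)
      rw [Finsupp.add_apply, Finsupp.add_apply, tXbar_apply_x, tX_apply_x, hxclx,
        Finsupp.single_apply] at h
      split_ifs at h <;> omega
    · have hc0 : (Finsupp.single (cVar l' : Var n m) (1 : ℕ)) (xcVar l) = 0 :=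
        Finsupp.single_eq_of_ne (by simp [cVar, xcVar])
      have hterm : termLit lit (i, true) l' (xcVar l) = if l' = l then 1 else 0 := by
        have hdef : termLit lit (i, true) l' =
            tX lit i + Finsupp.single (xcVar l') 1 - Finsupp.single (cVar l') 1 := rfl
        rw [hdef, Finsupp.tsub_apply, Finsupp.add_apply, tX_apply_xc, hc0,
          Finsupp.single_apply]
        simp [xcVar]
      have hy0 : (Finsupp.single (y : Var n m) (1 : ℕ)) (xcVar l) = 0 := Finsupp.single_eq_of_ne' hy1
      have hxc1 : (Finsupp.single (xcVar l : Var n m) (1 : ℕ)) (xcVar l) = 1 := Finsupp.single_eq_same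
      have h := DFunLike.congr_fun hy' (xcVar l)
      rw [Finsupp.add_apply, Finsupp.add_apply, hterm, tX_apply_xc, hxc1, hy0] at h
      have hl : l' = l := by
        by_contra hne
        rw [if_neg hne] at h
        omega
      subst hl
      have hkey' := hkey
      rw [hT] at hkey'
      exact hy2 (Finsupp.single_left_injective one_ne_zero
        (add_left_cancel (hy'.trans hkey'.symm)))
    · have hxcx : (Finsupp.single (xcVar l') (1 : ℕ)) (xVar i) = 0 :=
        Finsupp.single_eq_of_ne (by simp [xcVar, xVar])
      have hcx : (Finsupp.single (cVar l') (1 : ℕ)) (xVar i) = 0 :=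
        Finsupp.single_eq_of_ne (by simp [cVar, xVar])
      have hterm : termLit lit (i, false) l' (xVar i) = 2 := by
        have hdef : termLit lit (i, false) l' =
            tXbar lit i + Finsupp.single (xcVar l') 1 - Finsupp.single (cVar l') 1 := rfl
        rw [hdef, Finsupp.tsub_apply, Finsupp.add_apply, tXbar_apply_x, hxcx, hcx]
        norm_num
      have hxclx : (Finsupp.single (xcVar l) (1 : ℕ)) (xVar i) = 0 :=
        Finsupp.single_eq_of_ne (by simp [xcVar, xVar])
      have h := DFunLike.congr_fun hy' (xVar i)
      rw [Finsupp.add_apply, Finsupp.add_apply, hterm, tX_apply_x, hxclx,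
        Finsupp.single_apply] at h
      split_ifs at h <;> omega
  -- `T` has degree 8, so it lies in the border as well
  have hTdeg : (T.sum fun _ e => e) = 8 := by
    have hc := h4 i
    rw [← degHom_eq_sum, hT, tX, tC]
    simp only [map_add, map_sum, degHom_single]
    rw [Finset.sum_const, smul_eq_mul, mul_one]
    omega
  have hTb : T ∈ borderOf O :=
    monomial_mem_border hpre
      (Set.mem_union_left _ (Set.mem_union_right _ ⟨T, hTdeg, rfl⟩))
  obtain ⟨-, t', ht'O, y, hyeq⟩ := hTb
  exact (hchild t' ⟨y, hyeq.symm⟩).1 ht'O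


end BBD
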